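/- arXiv:1811.03595 — 4 statements merged into one kernel-verified Lean document; each statement's English description precedes it below -/
import Mathlib

section
/- If L is a prefix-free language over a linearly ordered alphabet and the supremum of L (in the lexicographic order on finite and infinite words) exists, then either every word of L is strictly less in the strict (non-prefix) lexicographic order than the supremum, or the supremum itself belongs to L. -/
open Stream'

variable {α : Type*}

/-- Strict (non-prefix) lexicographic order on finite and ω-words. -/
def sLt [LT α] (u v : Seq α) : Prop :=
  ∃ n a b, (∀ i < n, u.get? i = v.get? i) ∧ u.get? n = some a ∧ v.get? n = some b ∧ a < b

/-- Proper prefix order on finite and ω-words. -/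
def pLt (u v : Seq α) : Prop :=
  u ≠ v ∧ ∀ i a, u.get? i = some a → v.get? i = some a

/-- The lexicographic order `<_ℓ` is the union of `<_s` and `<_p`. -/
def lexLt [LT α] (u v : Seq α) : Prop := sLt u v ∨ pLt u v

def lexLe [LT α] (u v : Seq α) : Prop := lexLt u v ∨ u = v

/-- `s` is the supremum of `S` in `(Σ^{≤ω}, <_ℓ)`. -/
def IsSupW [LT α] (S : Set (Seq α)) (s : Seq α) : Prop :=
  (∀ w ∈ S, lexLe w s) ∧ ∀ t, (∀ w ∈ S, lexLe w t) → lexLe s t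

/-- A language is prefix-free: no word is a proper prefix of another. -/
def PrefixFree (L : Set (List α)) : Prop := ∀ u ∈ L, ∀ v ∈ L, u <+: v → u = v

lemma lexLt_asymm [LinearOrder α] {u v : Seq α} (h1 : lexLt u v) (h2 : lexLt v u) : False := by
  rcases h1 with ⟨n, a, b, hag, hua, hvb, hab⟩ | ⟨hne, hpre⟩
  · rcases h2 with ⟨m, a', b', hag', hva, hub, hab'⟩ | ⟨hne', hpre'⟩
    · rcases lt_trichotomy n m with h | h | h
      · have := hag' n h
        rw [hua, hvb] at this
        exact absurd (Option.some.inj this).symm (ne_of_lt hab)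
      · subst h
        rw [hvb] at hva; rw [hua] at hub
        obtain rfl := Option.some.inj hva
        obtain rfl := Option.some.inj hub
        exact absurd hab' (not_lt_of_gt hab)
      · have := hag m h
        rw [hva, hub] at this
        exact absurd (Option.some.inj this).symm (ne_of_lt hab')
    · have := hpre' n b hvb
      rw [hua] at this
      exact absurd (Option.some.inj this) (ne_of_lt hab)
  · rcases h2 with ⟨m, a', b', hag', hva, hub, hab'⟩ | ⟨hne', hpre'⟩
    · have := hpre m b' hub
      rw [hva] at this
      exact absurd (Option.some.inj this) (ne_of_lt hab')
    · apply hne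
      apply Seq.ext
      intro i
      cases hu : u.get? i with
      | none =>
        cases hv : v.get? i with
        | none => rfl
        | some c => rw [hpre' i c hv] at hu; exact absurd hu (by simp)
      | some c => simp [hu, hpre i c hu]

lemma lexLt_irrefl [LinearOrder α] {u : Seq α} (h : lexLt u u) : False := lexLt_asymm h h

lemma lexLe_total [LinearOrder α] (u v : Seq α) : lexLe u v ∨ lexLt v u := by
  by_cases heq : u = v
  · exact Or.inl (Or.inr heq)
  have hex : ∃ n, u.get? n ≠ v.get? n := by
    by_contra h
    push_neg at h
    exact heq (Seq.ext h)
  classical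
  set n := Nat.find hex with hn
  have hne : u.get? n ≠ v.get? n := Nat.find_spec hex
  have hag : ∀ i < n, u.get? i = v.get? i := fun i hi => by
    have := Nat.find_min hex hi
    push_neg at this; exact this
  cases hu : u.get? n with
  | none =>
    cases hv : v.get? n with
    | none => exact absurd (hu.trans hv.symm) hne
    | some b =>
      left; left; right
      refine ⟨heq, ?_⟩
      intro i a ha
      rcases lt_or_ge i n with hi | hi
      · rw [← hag i hi, ha]
      · rw [Seq.le_stable u hi hu] at ha; exact absurd ha (by simp)
  | some a =>
    cases hv : v.get? n with
    | none =>
      right; right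
      refine ⟨fun h => heq h.symm, ?_⟩
      intro i b hb
      rcases lt_or_ge i n with hi | hi
      · rw [hag i hi, hb]
      · rw [Seq.le_stable v hi hv] at hb; exact absurd hb (by simp)
    | some b =>
      rcases lt_trichotomy a b with h | h | h
      · exact Or.inl (Or.inl (Or.inl ⟨n, a, b, hag, hu, hv, h⟩))
      · subst h; exact absurd (hu.trans hv.symm) hne
      · exact Or.inr (Or.inl ⟨n, b, a, fun i hi => (hag i hi).symm, hv, hu, h⟩)

lemma prefix_of_get? {l₁ l₂ : List α} (h : ∀ (i : ℕ) (a : α), l₁[i]? = some a → l₂[i]? = some a) :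
    l₁ <+: l₂ := by
  induction l₁ generalizing l₂ with
  | nil => exact List.nil_prefix
  | cons a t ih =>
    cases l₂ with
    | nil => exact absurd (h 0 a rfl) (by simp)
    | cons b t₂ =>
      have h0 := h 0 a rfl
      simp at h0
      subst h0
      rw [List.cons_prefix_cons]
      exact ⟨rfl, ih fun i x hx => h (i + 1) x hx⟩

theorem sup_of_prefixFree [LinearOrder α] (L : Set (List α)) (hpf : PrefixFree L)
    (s : Seq α) (hs : IsSupW (Seq.ofList '' L) s) :
    (∀ w ∈ L, sLt (Seq.ofList w) s) ∨ s ∈ Seq.ofList '' L := by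
  by_cases hall : ∀ w ∈ L, sLt (Seq.ofList w) s
  · exact Or.inl hall
  right
  push_neg at hall
  obtain ⟨w, hwL, hnw⟩ := hall
  have hle : lexLe (Seq.ofList w) s := hs.1 _ ⟨w, hwL, rfl⟩
  rcases hle with (hslt | hplt) | heq
  · exact absurd hslt hnw
  · -- w is a proper prefix of s; show ofList w is an upper bound
    obtain ⟨hne, hpre⟩ := hplt
    have hub : ∀ t ∈ Seq.ofList '' L, lexLe t (Seq.ofList w) := by
      rintro _ ⟨v, hvL, rfl⟩
      rcases lexLe_total (Seq.ofList v) (Seq.ofList w) with h | h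
      · exact h
      rcases h with ⟨n, a, b, hag, hwa, hvb, hab⟩ | ⟨hne', hpre'⟩
      · -- then sLt s (ofList v), contradicting v ≤ s
        exfalso
        have hslt : sLt s (Seq.ofList v) := by
          refine ⟨n, a, b, fun i hi => ?_, ?_, hvb, hab⟩
          · have hwi : (Seq.ofList w).get? i ≠ none := fun hnone => by
              rw [Seq.le_stable _ (le_of_lt hi) hnone] at hwa
              exact absurd hwa (by simp)
            obtain ⟨c, hc⟩ := Option.ne_none_iff_exists'.mp hwi
            rw [← hag i hi, hc, hpre i c hc]
          · exact hpre n a hwa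
        have := hs.1 _ ⟨v, hvL, rfl⟩
        rcases this with hlt | heq2
        · exact lexLt_asymm hlt (Or.inl hslt)
        · rw [heq2] at hslt; exact lexLt_irrefl (Or.inl hslt)
      · -- w proper prefix of v, contradicts prefix-freeness
        exfalso
        apply hne'
        congr 1
        apply hpf w hwL v hvL
        apply prefix_of_get?
        intro i a ha
        have := hpre' i a (by rw [Seq.ofList_get?]; exact ha)
        rwa [Seq.ofList_get?] at this
    have := hs.2 _ hub
    rcases this with hlt | heq2
    · exact absurd (lexLt_asymm hlt (Or.inr ⟨hne, hpre⟩)) not_false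
    · exact ⟨w, hwL, heq2.symm⟩
  · exact ⟨w, hwL, heq⟩
end

section
/- Let K and L be nonempty prefix-free languages over a totally ordered alphabet whose suprema ⋁K and ⋁L exist in Σ^{≤ω}. Then ⋁(KL) = ⋁K if every word of K is strictly less than ⋁K in the strict order <_s, and ⋁(KL) = (⋁K)·(⋁L) otherwise. Moreover ⋁(KL) ∈ KL if and only if ⋁K ∈ K and ⋁L ∈ L. -/
open Stream'

variable {α : Type*}

section Compat

/-- Compatibility: the old `List.get?`. -/
def List.get? : List α → ℕ → Option α
  | List.nil, _ => none
  | List.cons a _, Nat.zero => some a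
  | List.cons _ l, Nat.succ n => List.get? l n

attribute [simp] List.get?

theorem List.get?_eq_getElem?' (l : List α) (n : ℕ) : l.get? n = l[n]? := by
  induction l generalizing n with
  | nil => rfl
  | cons a l ih => cases n <;> simp [ih]

theorem List.get?_eq_some {l : List α} {n : ℕ} {a : α} :
    l.get? n = some a ↔ ∃ h : n < l.length, l.get ⟨n, h⟩ = a := by
  rw [List.get?_eq_getElem?', List.getElem?_eq_some_iff]; simp

theorem List.get?_eq_get {l : List α} {n : ℕ} (h : n < l.length) :
    l.get? n = some (l.get ⟨n, h⟩) := by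
  rw [List.get?_eq_getElem?']; simp [h]

theorem List.get?_append {l₁ l₂ : List α} {n : ℕ} (hn : n < l₁.length) :
    (l₁ ++ l₂).get? n = l₁.get? n := by
  rw [List.get?_eq_getElem?', List.get?_eq_getElem?', List.getElem?_append_left hn]

theorem Stream'.Seq.ofList_get (l : List α) (n : ℕ) : (Seq.ofList l).get? n = l.get? n := by
  rw [Seq.ofList_get?, List.get?_eq_getElem?']

end Compat

section Helpers

set_option linter.deprecated false

lemma get?_dropn (s : Seq α) (m n : ℕ) : (s.drop m).get? n = s.get? (m + n) := by
  rw [← Seq.head_dropn, ← Seq.dropn_add, Seq.head_dropn]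

lemma get?_ofList_append (w : List α) (u : Seq α) (n : ℕ) :
    ((Seq.ofList w).append u).get? n =
      if n < w.length then w.get? n else u.get? (n - w.length) := by
  induction w generalizing n with
  | nil => simp [Seq.ofList_nil, Seq.nil_append]
  | cons a l ih =>
    rw [Seq.ofList_cons, Seq.cons_append]
    cases n with
    | zero => simp
    | succ n =>
      rw [Seq.get?_cons_succ, ih]
      simp [Nat.succ_lt_succ_iff, Nat.succ_sub_one]

lemma get?_ofList_append_lt {w : List α} (u : Seq α) {n : ℕ} (h : n < w.length) :
    ((Seq.ofList w).append u).get? n = w.get? n := by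
  rw [get?_ofList_append, if_pos h]

lemma get?_ofList_append_add (w : List α) (u : Seq α) (n : ℕ) :
    ((Seq.ofList w).append u).get? (w.length + n) = u.get? n := by
  rw [get?_ofList_append, if_neg (by omega), Nat.add_sub_cancel_left]

lemma append_left_cancel {w : List α} {u v : Seq α}
    (h : (Seq.ofList w).append u = (Seq.ofList w).append v) : u = v := by
  apply Seq.ext
  intro n
  have := congrArg (fun s => Seq.get? s (w.length + n)) h
  simpa [get?_ofList_append_add] using this

lemma prefix_of_get?_imp {w v : List α}
    (h : ∀ i a, w.get? i = some a → v.get? i = some a) : w <+: v := by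
  induction w generalizing v with
  | nil => exact v.nil_prefix
  | cons a l ih =>
    have h0 := h 0 a rfl
    cases v with
    | nil => simp at h0
    | cons b v' =>
      simp only [List.get?] at h0
      obtain rfl : b = a := by injection h0
      exact List.cons_prefix_cons.mpr ⟨rfl, ih fun i x hx => h (i + 1) x hx⟩

lemma get?_of_prefix {w v : List α} (h : w <+: v) {i : ℕ} {a : α}
    (hi : w.get? i = some a) : v.get? i = some a := by
  obtain ⟨t, rfl⟩ := h
  rw [List.get?_append ((List.get?_eq_some.mp hi).1)]
  exact hi

lemma prefix_comparable {w v : List α} {s : Seq α}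
    (hw : ∀ i a, w.get? i = some a → s.get? i = some a)
    (hv : ∀ i a, v.get? i = some a → s.get? i = some a) :
    w <+: v ∨ v <+: w := by
  rcases le_total w.length v.length with h | h
  · left
    refine prefix_of_get?_imp fun i a ha => ?_
    have hb := List.get?_eq_get (lt_of_lt_of_le (List.get?_eq_some.mp ha).1 h)
    have := (hv i _ hb).symm.trans (hw i a ha)
    rw [hb]; injection this with h'; rw [h']
  · right
    refine prefix_of_get?_imp fun i a ha => ?_
    have hb := List.get?_eq_get (lt_of_lt_of_le (List.get?_eq_some.mp ha).1 h)
    have := (hw i _ hb).symm.trans (hv i a ha)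
    rw [hb]; injection this with h'; rw [h']

end Helpers

section Order

variable [LinearOrder α]

lemma sLt_irrefl (u : Seq α) : ¬ sLt u u := by
  rintro ⟨n, a, b, -, ha, hb, hab⟩
  rw [ha] at hb; injection hb with h; exact absurd hab (h ▸ lt_irrefl a)

lemma lexLe_refl (u : Seq α) : lexLe u u := Or.inr rfl

lemma sLt_trans {u v w : Seq α} (h1 : sLt u v) (h2 : sLt v w) : sLt u w := by
  obtain ⟨n, a, b, hn, ha, hb, hab⟩ := h1
  obtain ⟨m, c, d, hm, hc, hd, hcd⟩ := h2
  rcases lt_trichotomy n m with h | rfl | h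
  · refine ⟨n, a, b, fun i hi => (hn i hi).trans (hm i (hi.trans h)), ha, (hm n h ▸ hb), hab⟩
  · rw [hb] at hc; injection hc with hbc
    exact ⟨n, a, d, fun i hi => (hn i hi).trans (hm i hi), ha, hd, lt_trans (hbc ▸ hab) hcd⟩
  · exact ⟨m, c, d, fun i hi => (hn i (hi.trans h)).trans (hm i hi), (hn m h).trans hc, hd, hcd⟩

lemma sLt_pLt_trans {u v w : Seq α} (h1 : sLt u v) (h2 : pLt v w) : sLt u w := by
  obtain ⟨n, a, b, hn, ha, hb, hab⟩ := h1
  refine ⟨n, a, b, fun i hi => ?_, ha, h2.2 n b hb, hab⟩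
  obtain ⟨c, hc⟩ := Seq.ge_stable v (le_of_lt hi) hb
  rw [hn i hi, hc, h2.2 i c hc]

lemma pLt_sLt_trans {u v w : Seq α} (h1 : pLt u v) (h2 : sLt v w) : lexLt u w := by
  obtain ⟨n, b, c, hn, hb, hc, hbc⟩ := h2
  cases hu : u.get? n with
  | some a =>
    left
    have hva := h1.2 n a hu
    rw [hb] at hva; injection hva with hba
    refine ⟨n, a, c, fun i hi => ?_, hu, hc, hba ▸ hbc⟩
    obtain ⟨e, he⟩ := Seq.ge_stable u (le_of_lt hi) hu
    rw [he, ← hn i hi, h1.2 i e he]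
  | none =>
    right
    constructor
    · rintro rfl; rw [hu] at hc; cases hc
    · intro i a ha
      have hin : i < n := by
        by_contra h
        obtain ⟨e, he⟩ := Seq.ge_stable u (not_lt.mp h) ha
        rw [hu] at he; cases he
      rw [← hn i hin]; exact h1.2 i a ha

omit [LinearOrder α] in
lemma pLt_pLt_eq {u v : Seq α} (h1 : pLt u v) (h2 : pLt v u) : u = v := by
  apply Seq.ext; intro n
  cases hu : u.get? n with
  | some a => exact (h1.2 n a hu).symm
  | none =>
    cases hv : v.get? n with
    | some b => rw [← hu, h2.2 n b hv]
    | none => rfl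

lemma pLt_trans {u v w : Seq α} (h1 : pLt u v) (h2 : pLt v w) : pLt u w := by
  constructor
  · rintro rfl
    exact h1.1 (pLt_pLt_eq h1 h2)
  · exact fun i a ha => h2.2 i a (h1.2 i a ha)

lemma lexLe_trans {u v w : Seq α} (h1 : lexLe u v) (h2 : lexLe v w) : lexLe u w := by
  rcases h1 with h1 | rfl
  · rcases h2 with h2 | rfl
    · rcases h1 with h1 | h1 <;> rcases h2 with h2 | h2
      · exact Or.inl (Or.inl (sLt_trans h1 h2))
      · exact Or.inl (Or.inl (sLt_pLt_trans h1 h2))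
      · exact Or.inl (pLt_sLt_trans h1 h2)
      · exact Or.inl (Or.inr (pLt_trans h1 h2))
    · exact Or.inl h1
  · exact h2

lemma lexLe_antisymm {u v : Seq α} (h1 : lexLe u v) (h2 : lexLe v u) : u = v := by
  rcases h1 with (h1 | h1) | rfl
  · rcases h2 with (h2 | h2) | rfl
    · exact absurd (sLt_trans h1 h2) (sLt_irrefl u)
    · exact absurd (sLt_pLt_trans h1 h2) (sLt_irrefl u)
    · rfl
  · rcases h2 with (h2 | h2) | rfl
    · exact absurd (sLt_pLt_trans h2 h1) (sLt_irrefl v)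
    · exact pLt_pLt_eq h1 h2
    · rfl
  · rfl

lemma supw_unique {S : Set (Seq α)} {s t : Seq α} (h1 : IsSupW S s) (h2 : IsSupW S t) :
    s = t :=
  lexLe_antisymm (h1.2 t h2.1) (h2.2 s h1.1)

end Order

section Append

set_option linter.deprecated false
set_option linter.unusedSectionVars false

variable [LinearOrder α]

lemma get?_lt_length {w : List α} {n : ℕ} {a : α} (h : (Seq.ofList w).get? n = some a) :
    n < w.length := by
  rw [Seq.ofList_get] at h
  exact (List.get?_eq_some.mp h).1

lemma sLt_append_left {w : List α} {t : Seq α} (u : Seq α) (h : sLt (Seq.ofList w) t) :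
    sLt ((Seq.ofList w).append u) t := by
  obtain ⟨n, a, b, hn, ha, hb, hab⟩ := h
  have hlen := get?_lt_length ha
  refine ⟨n, a, b, fun i hi => ?_, ?_, hb, hab⟩
  · rw [get?_ofList_append_lt u (hi.trans hlen), ← Seq.ofList_get, hn i hi]
  · rw [get?_ofList_append_lt u hlen, ← Seq.ofList_get]; exact ha

lemma sLt_append_both {w w' : List α} (u u' : Seq α)
    (h : sLt (Seq.ofList w) (Seq.ofList w')) :
    sLt ((Seq.ofList w).append u) ((Seq.ofList w').append u') := by
  obtain ⟨n, a, b, hn, ha, hb, hab⟩ := h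
  have hlen := get?_lt_length ha
  have hlen' := get?_lt_length hb
  refine ⟨n, a, b, fun i hi => ?_, ?_, ?_, hab⟩
  · rw [get?_ofList_append_lt u (hi.trans hlen), get?_ofList_append_lt u' (hi.trans hlen'),
      ← Seq.ofList_get, ← Seq.ofList_get, hn i hi]
  · rw [get?_ofList_append_lt u hlen, ← Seq.ofList_get]; exact ha
  · rw [get?_ofList_append_lt u' hlen', ← Seq.ofList_get]; exact hb

lemma not_sLt_self_append (w : List α) (u : Seq α) :
    ¬ sLt (Seq.ofList w) ((Seq.ofList w).append u) := by
  rintro ⟨n, a, b, -, ha, hb, hab⟩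
  have hlen := get?_lt_length ha
  rw [get?_ofList_append_lt u hlen, ← Seq.ofList_get, ha] at hb
  injection hb with h; exact absurd hab (h ▸ lt_irrefl a)

lemma lexLe_self_append (w : List α) (u : Seq α) :
    lexLe (Seq.ofList w) ((Seq.ofList w).append u) := by
  by_cases h : Seq.ofList w = (Seq.ofList w).append u
  · exact Or.inr h
  · refine Or.inl (Or.inr ⟨h, fun i a ha => ?_⟩)
    rw [get?_ofList_append_lt u (get?_lt_length ha), ← Seq.ofList_get]; exact ha

lemma lexLe_append_right {w : List α} {u v : Seq α} (h : lexLe u v) :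
    lexLe ((Seq.ofList w).append u) ((Seq.ofList w).append v) := by
  rcases h with (h | h) | rfl
  · obtain ⟨n, a, b, hn, ha, hb, hab⟩ := h
    refine Or.inl (Or.inl ⟨w.length + n, a, b, fun i hi => ?_, ?_, ?_, hab⟩)
    · rw [get?_ofList_append, get?_ofList_append]
      split
      · rfl
      · rw [hn (i - w.length) (by omega)]
    · rw [get?_ofList_append_add]; exact ha
    · rw [get?_ofList_append_add]; exact hb
  · refine Or.inl (Or.inr ⟨fun he => h.1 (append_left_cancel he), fun i a ha => ?_⟩)
    rw [get?_ofList_append] at ha ⊢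
    split at ha
    · rwa [if_pos (by assumption)]
    · rw [if_neg (by assumption)]; exact h.2 _ a ha
  · exact Or.inr rfl

lemma lexLe_of_append_le {w : List α} {u v : Seq α}
    (h : lexLe ((Seq.ofList w).append u) ((Seq.ofList w).append v)) : lexLe u v := by
  rcases h with (h | h) | he
  · obtain ⟨n, a, b, hn, ha, hb, hab⟩ := h
    have hwn : ¬ n < w.length := by
      intro hlt
      rw [get?_ofList_append_lt u hlt] at ha
      rw [get?_ofList_append_lt v hlt, ha] at hb
      injection hb with h'; exact absurd hab (h' ▸ lt_irrefl a)
    rw [get?_ofList_append, if_neg hwn] at ha hb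
    refine Or.inl (Or.inl ⟨n - w.length, a, b, fun i hi => ?_, ha, hb, hab⟩)
    have := hn (w.length + i) (by omega)
    rwa [get?_ofList_append_add, get?_ofList_append_add] at this
  · refine Or.inl (Or.inr ⟨fun he => h.1 (he ▸ rfl), fun i a ha => ?_⟩)
    have := h.2 (w.length + i) a (by rwa [get?_ofList_append_add])
    rwa [get?_ofList_append_add] at this
  · exact Or.inr (append_left_cancel he)

end Append

section Collapse

set_option linter.deprecated false
set_option linter.unusedSectionVars false

variable [LinearOrder α]

lemma sup_collapse {K : Set (List α)} (hKpf : PrefixFree K) {sK : Seq α}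
    (hsK : IsSupW (Seq.ofList '' K) sK) {w₀ : List α} (hw₀ : w₀ ∈ K)
    (hns : ¬ sLt (Seq.ofList w₀) sK) : sK = Seq.ofList w₀ := by
  have hle := hsK.1 _ ⟨w₀, hw₀, rfl⟩
  have carries : ∀ i a, (Seq.ofList w₀).get? i = some a → sK.get? i = some a := by
    rcases hle with (h | h) | h
    · exact absurd h hns
    · exact h.2
    · intro i a ha; rwa [← h]
  have hrev : ∀ i, i < w₀.length → sK.get? i = (Seq.ofList w₀).get? i := by
    intro i hi
    have hb := List.get?_eq_get hi
    rw [Seq.ofList_get, hb]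
    exact carries i _ (by rw [Seq.ofList_get, hb])
  have hub : ∀ x ∈ Seq.ofList '' K, lexLe x (Seq.ofList w₀) := by
    rintro x ⟨w, hw, rfl⟩
    rcases hsK.1 _ ⟨w, hw, rfl⟩ with (hs | hp) | he
    · obtain ⟨n, a, b, hn, ha, hb, hab⟩ := hs
      by_cases hnlt : n < w₀.length
      · refine Or.inl (Or.inl ⟨n, a, b, fun i hi => ?_, ha, ?_, hab⟩)
        · rw [hn i hi, hrev i (hi.trans hnlt)]
        · rw [← hrev n hnlt]; exact hb
      · exfalso
        have hpre : w₀ <+: w := by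
          refine prefix_of_get?_imp fun i a' ha' => ?_
          have hi : i < w₀.length := (List.get?_eq_some.mp ha').1
          have h1 : sK.get? i = some a' := carries i a' (by rwa [Seq.ofList_get])
          have h2 := hn i (by omega)
          rw [Seq.ofList_get] at h2
          rw [h2]; exact h1
        have heq := hKpf w₀ hw₀ w hw hpre
        exact hnlt (by rw [heq]; exact get?_lt_length ha)
    · have hcw : ∀ i a, w.get? i = some a → sK.get? i = some a :=
        fun i a ha => hp.2 i a (by rwa [Seq.ofList_get])
      have hcw₀ : ∀ i a, w₀.get? i = some a → sK.get? i = some a :=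
        fun i a ha => carries i a (by rwa [Seq.ofList_get])
      rcases prefix_comparable hcw hcw₀ with h | h
      · rw [hKpf w hw w₀ hw₀ h]; exact lexLe_refl _
      · have := hKpf w₀ hw₀ w hw h
        subst this; exact lexLe_refl _
    · have hcw₀ : ∀ i a, w₀.get? i = some a → w.get? i = some a := by
        intro i a ha
        have := carries i a (by rwa [Seq.ofList_get])
        rw [← he, Seq.ofList_get] at this; exact this
      have := hKpf w₀ hw₀ w hw (prefix_of_get?_imp hcw₀)
      subst this; exact lexLe_refl _
  exact lexLe_antisymm (hsK.2 _ hub) (hsK.1 _ ⟨w₀, hw₀, rfl⟩)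

lemma eq_or_sLt_of_lexLe {K : Set (List α)} (hKpf : PrefixFree K) {w w₀ : List α}
    (hw : w ∈ K) (hw₀ : w₀ ∈ K)
    (h : lexLe (Seq.ofList w) (Seq.ofList w₀)) :
    w = w₀ ∨ sLt (Seq.ofList w) (Seq.ofList w₀) := by
  rcases h with (h | h) | h
  · exact Or.inr h
  · left
    refine hKpf w hw w₀ hw₀ (prefix_of_get?_imp fun i a ha => ?_)
    have := h.2 i a (by rwa [Seq.ofList_get])
    rwa [Seq.ofList_get] at this
  · exact Or.inl (Seq.ofList_injective h)

end Collapse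

section Main

set_option linter.deprecated false
set_option linter.unusedSectionVars false

variable [LinearOrder α]

lemma isSup_case1 {K L : Set (List α)} (hLne : L.Nonempty) {sK : Seq α}
    (hsK : IsSupW (Seq.ofList '' K) sK)
    (hall : ∀ w ∈ K, sLt (Seq.ofList w) sK) :
    IsSupW (Seq.ofList '' (Set.image2 (· ++ ·) K L)) sK := by
  constructor
  · rintro x ⟨z, hz, rfl⟩
    obtain ⟨w, hw, v, hv, rfl⟩ := hz
    rw [Seq.ofList_append]
    exact Or.inl (Or.inl (sLt_append_left _ (hall w hw)))
  · intro t ht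
    apply hsK.2
    rintro x ⟨w, hw, rfl⟩
    obtain ⟨v, hv⟩ := hLne
    have h1 : lexLe (Seq.ofList w) (Seq.ofList (w ++ v)) := by
      rw [Seq.ofList_append]; exact lexLe_self_append w (Seq.ofList v)
    exact lexLe_trans h1 (ht _ ⟨w ++ v, Set.mem_image2_of_mem hw hv, rfl⟩)

lemma isSup_case2 {K L : Set (List α)} (hLne : L.Nonempty) (hKpf : PrefixFree K)
    {sL : Seq α} {w₀ : List α}
    (hw₀ : w₀ ∈ K) (hsK : IsSupW (Seq.ofList '' K) (Seq.ofList w₀))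
    (hsL : IsSupW (Seq.ofList '' L) sL) :
    IsSupW (Seq.ofList '' (Set.image2 (· ++ ·) K L)) ((Seq.ofList w₀).append sL) := by
  constructor
  · rintro x ⟨z, hz, rfl⟩
    obtain ⟨w, hw, v, hv, rfl⟩ := hz
    rw [Seq.ofList_append]
    rcases eq_or_sLt_of_lexLe hKpf hw hw₀ (hsK.1 _ ⟨w, hw, rfl⟩) with rfl | hslt
    · exact lexLe_append_right (hsL.1 _ ⟨v, hv, rfl⟩)
    · exact Or.inl (Or.inl (sLt_append_both _ _ hslt))
  · intro t ht
    by_cases hagree : ∀ i a, (Seq.ofList w₀).get? i = some a → t.get? i = some a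
    · have hteq : t = (Seq.ofList w₀).append (t.drop w₀.length) := by
        apply Seq.ext
        intro n
        rw [get?_ofList_append]
        split
        · next h =>
          have hb := List.get?_eq_get h
          rw [hb]
          exact hagree n _ (by rw [Seq.ofList_get, hb])
        · next h =>
          rw [get?_dropn]
          congr 1
          omega
      have hub : ∀ x ∈ Seq.ofList '' L, lexLe x (t.drop w₀.length) := by
        rintro x ⟨v, hv, rfl⟩
        have h2 := ht _ ⟨w₀ ++ v, Set.mem_image2_of_mem hw₀ hv, rfl⟩
        rw [Seq.ofList_append, hteq] at h2
        exact lexLe_of_append_le h2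
      rw [hteq]
      exact lexLe_append_right (hsL.2 _ hub)
    · push_neg at hagree
      classical
      have hP : ∃ n, ∃ a, (Seq.ofList w₀).get? n = some a ∧ t.get? n ≠ some a := by
        obtain ⟨i₀, a₀, hi₀, hne₀⟩ := hagree
        exact ⟨i₀, a₀, hi₀, hne₀⟩
      obtain ⟨n, hspec, hmin0⟩ :
          ∃ n, (∃ a, (Seq.ofList w₀).get? n = some a ∧ t.get? n ≠ some a) ∧
            ∀ j < n, ¬∃ b, (Seq.ofList w₀).get? j = some b ∧ t.get? j ≠ some b :=
        ⟨Nat.find hP, Nat.find_spec hP, fun j hj => Nat.find_min hP hj⟩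
      obtain ⟨a, han, hna⟩ := hspec
      have hmin : ∀ j < n, ∀ b, (Seq.ofList w₀).get? j = some b → t.get? j = some b := by
        intro j hj b hb
        by_contra hc
        exact hmin0 j hj ⟨b, hb, hc⟩
      have hnlen : n < w₀.length := get?_lt_length han
      obtain ⟨v₁, hv₁⟩ := hLne
      have h1 := ht _ ⟨w₀ ++ v₁, Set.mem_image2_of_mem hw₀ hv₁, rfl⟩
      rw [Seq.ofList_append] at h1
      have hgetn : ∀ u : Seq α, ((Seq.ofList w₀).append u).get? n = some a := fun u => by
        rw [get?_ofList_append_lt u hnlen, ← Seq.ofList_get]; exact han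
      have hd : ∃ d, t.get? n = some d ∧ a < d := by
        rcases h1 with (hs | hp) | he
        · obtain ⟨m, c, d, hm, hc, hdd, hcd⟩ := hs
          rcases lt_trichotomy m n with h | heq | h
          · exfalso
            have hmw : m < w₀.length := h.trans hnlen
            rw [get?_ofList_append_lt _ hmw] at hc
            have h3 := hmin m h c (by rw [Seq.ofList_get]; exact hc)
            rw [h3] at hdd; injection hdd with h'
            exact absurd hcd (h' ▸ lt_irrefl _)
          · subst heq
            rw [hgetn (Seq.ofList v₁)] at hc
            injection hc with h'
            exact ⟨d, hdd, h' ▸ hcd⟩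
          · exfalso
            have h3 := hm n h
            rw [hgetn (Seq.ofList v₁)] at h3
            exact hna h3.symm
        · exact absurd (hp.2 n a (hgetn _)) hna
        · exact absurd (by rw [← he]; exact hgetn _) hna
      obtain ⟨d, htd, had⟩ := hd
      refine Or.inl (Or.inl ⟨n, a, d, fun j hj => ?_, hgetn sL, htd, had⟩)
      have hjw : j < w₀.length := hj.trans hnlen
      rw [get?_ofList_append_lt sL hjw]
      have hb := List.get?_eq_get hjw
      rw [hb]
      exact (hmin j hj _ (by rw [Seq.ofList_get, hb])).symm

end Main

theorem sup_of_product [LinearOrder α] (K L : Set (List α))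
    (hKne : K.Nonempty) (hLne : L.Nonempty)
    (hKpf : PrefixFree K) (hLpf : PrefixFree L)
    (sK sL s : Seq α)
    (hsK : IsSupW (Seq.ofList '' K) sK) (hsL : IsSupW (Seq.ofList '' L) sL)
    (hs : IsSupW (Seq.ofList '' (Set.image2 (· ++ ·) K L)) s) :
    ((∀ w ∈ K, sLt (Seq.ofList w) sK) → s = sK) ∧
    (¬ (∀ w ∈ K, sLt (Seq.ofList w) sK) → s = sK.append sL) ∧
    (s ∈ Seq.ofList '' Set.image2 (· ++ ·) K L ↔
      sK ∈ Seq.ofList '' K ∧ sL ∈ Seq.ofList '' L) := by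
  have h1 : (∀ w ∈ K, sLt (Seq.ofList w) sK) → s = sK := fun hall =>
    supw_unique hs (isSup_case1 hLne hsK hall)
  have h2 : ¬(∀ w ∈ K, sLt (Seq.ofList w) sK) → s = sK.append sL := by
    intro hnot
    push_neg at hnot
    obtain ⟨w₀, hw₀, hns⟩ := hnot
    have hcol := sup_collapse hKpf hsK hw₀ hns
    rw [hcol]
    exact supw_unique hs (isSup_case2 hLne hKpf hw₀ (hcol ▸ hsK) hsL)
  refine ⟨h1, h2, ?_, ?_⟩
  · rintro ⟨z, hz, hz'⟩
    obtain ⟨w, hw, v, hv, rfl⟩ := hz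
    have hncase1 : ¬∀ w ∈ K, sLt (Seq.ofList w) sK := by
      intro hall
      have hseq := h1 hall
      have hthis := hall w hw
      rw [← hseq, ← hz', Seq.ofList_append] at hthis
      exact not_sLt_self_append w _ hthis
    have hs2' := h2 hncase1
    obtain ⟨w₀, hw₀, hns⟩ : ∃ w ∈ K, ¬ sLt (Seq.ofList w) sK := by
      push_neg at hncase1; exact hncase1
    have hcol := sup_collapse hKpf hsK hw₀ hns
    have hs2 : Seq.ofList (w ++ v) = (Seq.ofList w₀).append sL := by
      rw [hz', hs2', hcol]
    rcases eq_or_sLt_of_lexLe hKpf hw hw₀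
        (by rw [← hcol]; exact hsK.1 _ ⟨w, hw, rfl⟩) with rfl | hslt
    · refine ⟨⟨w, hw, hcol.symm⟩, ⟨v, hv, ?_⟩⟩
      have hcc : (Seq.ofList w).append (Seq.ofList v) = (Seq.ofList w).append sL := by
        rw [← Seq.ofList_append]; exact hs2
      exact append_left_cancel hcc
    · exfalso
      have hx := sLt_append_both (Seq.ofList v) sL hslt
      rw [← Seq.ofList_append, hs2] at hx
      exact sLt_irrefl _ hx
  · rintro ⟨⟨w₀, hw₀, hsk⟩, ⟨v₀, hv₀, hsl⟩⟩
    have hncase1 : ¬∀ w ∈ K, sLt (Seq.ofList w) sK := by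
      intro hall
      have hx := hall w₀ hw₀
      rw [hsk] at hx
      exact sLt_irrefl _ hx
    have hs2 := h2 hncase1
    refine ⟨w₀ ++ v₀, Set.mem_image2_of_mem hw₀ hv₀, ?_⟩
    rw [Seq.ofList_append, hsk, hsl, hs2]
end

section
/- Let I be a countable well-ordered set with I = A ∪ B, and suppose o(A) = ω^{α₁}·a₁ + ... + ω^{αₙ}·aₙ and o(B) = ω^{α₁}·b₁ + ... + ω^{αₙ}·bₙ with α₁ > ... > αₙ ordinals and aᵢ, bᵢ ≥ 0 integers with max(aᵢ,bᵢ) ≥ 1. Then o(I) = ω^{α₁}·c₁ + ... + ω^{αₙ}·cₙ for some integers cᵢ with cᵢ ≤ aᵢ + bᵢ for all i and c₁ ≥ max(a₁, b₁). -/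
open Ordinal

noncomputable def deg (a : Ordinal) : Ordinal := Ordinal.log omega0 a
noncomputable def oType {ι : Type*} [LinearOrder ι] [WellFoundedLT ι] (S : Set ι) : Ordinal :=
  Ordinal.type (Subrel ((· < ·) : ι → ι → Prop) (· ∈ S))
noncomputable def cnfSum (n : ℕ) (e : Fin n → Ordinal) (c : Fin n → ℕ) : Ordinal :=
  (List.ofFn fun i => omega0 ^ (e i) * (c i)).sum
noncomputable def omegaSum (o : ℕ → Ordinal) : Ordinal :=
  ⨆ n, (List.ofFn fun i : Fin n => o i).sum

universe u

noncomputable def nadd : Ordinal.{u} → Ordinal.{u} → Ordinal.{u}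
  | a, b =>
    max (blsub.{u, u} a fun a' _ => nadd a' b) (blsub.{u, u} b fun b' _ => nadd a b')
termination_by a b => (a, b)

infixl:65 " ♯ " => nadd

theorem nadd_def (a b : Ordinal.{u}) :
    a ♯ b = max (blsub.{u, u} a fun a' _ => a' ♯ b) (blsub.{u, u} b fun b' _ => a ♯ b') := by
  rw [nadd]

theorem lt_nadd_iff {a b c : Ordinal.{u}} :
    a < b ♯ c ↔ (∃ b' < b, a ≤ b' ♯ c) ∨ ∃ c' < c, a ≤ b ♯ c' := by
  rw [nadd_def]; simp [lt_blsub_iff]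

theorem nadd_le_iff {a b c : Ordinal.{u}} :
    b ♯ c ≤ a ↔ (∀ b' < b, b' ♯ c < a) ∧ ∀ c' < c, b ♯ c' < a := by
  rw [nadd_def]; simp [blsub_le_iff]

theorem nadd_lt_nadd_left {b c : Ordinal.{u}} (h : b < c) (a : Ordinal.{u}) : a ♯ b < a ♯ c :=
  lt_nadd_iff.2 (Or.inr ⟨b, h, le_rfl⟩)

theorem nadd_lt_nadd_right {b c : Ordinal.{u}} (h : b < c) (a : Ordinal.{u}) : b ♯ a < c ♯ a :=
  lt_nadd_iff.2 (Or.inl ⟨b, h, le_rfl⟩)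

theorem nadd_le_nadd_left {b c : Ordinal.{u}} (h : b ≤ c) (a : Ordinal.{u}) : a ♯ b ≤ a ♯ c := by
  rcases lt_or_eq_of_le h with h | rfl
  · exact (nadd_lt_nadd_left h a).le
  · exact le_rfl

theorem nadd_le_nadd_right {b c : Ordinal.{u}} (h : b ≤ c) (a : Ordinal.{u}) : b ♯ a ≤ c ♯ a := by
  rcases lt_or_eq_of_le h with h | rfl
  · exact (nadd_lt_nadd_right h a).le
  · exact le_rfl

@[simp]
theorem nadd_zero (a : Ordinal.{u}) : a ♯ 0 = a := by
  induction a using Ordinal.induction with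
  | _ a IH =>
    rw [nadd_def, blsub_zero, max_zero_right]
    exact (congrArg (blsub.{u, u} a) (funext fun b => funext fun hb => IH b hb)).trans (blsub_id a)

@[simp]
theorem zero_nadd (a : Ordinal.{u}) : 0 ♯ a = a := by
  induction a using Ordinal.induction with
  | _ a IH =>
    rw [nadd_def, blsub_zero, max_zero_left]
    exact (congrArg (blsub.{u, u} a) (funext fun b => funext fun hb => IH b hb)).trans (blsub_id a)

section Plumbing

variable {ι : Type*} [LinearOrder ι] [WellFoundedLT ι]

theorem oType_mono {S T : Set ι} (h : S ⊆ T) : oType S ≤ oType T := by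
  refine RelEmbedding.ordinal_type_le ⟨⟨Set.inclusion h, fun a b hab => ?_⟩, ?_⟩
  · exact Subtype.ext (by simpa using (Subtype.ext_iff.1 hab))
  · intro a b; rfl

theorem oType_empty : oType (∅ : Set ι) = 0 :=
  type_eq_zero_of_empty _

theorem oType_eq_empty {S : Set ι} (h : oType S = 0) : S = ∅ := by
  rw [oType, type_eq_zero_iff_isEmpty] at h
  exact Set.eq_empty_iff_forall_notMem.2 fun x hx => h.elim' ⟨x, hx⟩

theorem oType_split (S : Set ι) (x : ι) :
    oType S = oType (S ∩ Set.Iio x) + oType (S ∩ Set.Ici x) := by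
  rw [oType, oType, oType, ← type_sum_lex]
  refine (Ordinal.type_eq.2 ⟨RelIso.symm ⟨Equiv.ofBijective ?_ ⟨?_, ?_⟩, ?_⟩⟩)
  · exact fun y => Sum.elim (fun a => (⟨a.1, a.2.1⟩ : S)) (fun a => ⟨a.1, a.2.1⟩) y
  · rintro (⟨a, ha⟩ | ⟨a, ha⟩) (⟨b, hb⟩ | ⟨b, hb⟩) h <;>
      simp only [Sum.elim_inl, Sum.elim_inr, Subtype.mk.injEq] at h <;>
      subst h
    · rfl
    · exact absurd (ha.2.trans_le hb.2) (lt_irrefl _)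
    · exact absurd (hb.2.trans_le ha.2) (lt_irrefl _)
    · rfl
  · rintro ⟨y, hy⟩
    rcases lt_or_ge y x with h | h
    · exact ⟨Sum.inl ⟨y, hy, h⟩, rfl⟩
    · exact ⟨Sum.inr ⟨y, hy, h⟩, rfl⟩
  · rintro (⟨a, ha⟩ | ⟨a, ha⟩) (⟨b, hb⟩ | ⟨b, hb⟩)
    · exact ⟨fun h => Sum.Lex.inl h, fun h => by cases h with | inl h => exact h⟩
    · exact ⟨fun _ => Sum.Lex.sep _ _, fun _ => ha.2.trans_le hb.2⟩
    · exact ⟨fun h => absurd ((show a < b from h).trans hb.2) (not_lt.2 ha.2),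
        fun h => by cases h⟩
    · exact ⟨fun h => Sum.Lex.inr h, fun h => by cases h with | inr h => exact h⟩

theorem oType_Iio {S : Set ι} {x : ι} (hx : x ∈ S) :
    oType (S ∩ Set.Iio x) = typein (Subrel ((· < ·) : ι → ι → Prop) (· ∈ S)) ⟨x, hx⟩ := by
  rw [← type_subrel, oType]
  refine Ordinal.type_eq.2 ⟨⟨Equiv.ofBijective
    (fun y => ⟨⟨y.1, y.2.1⟩, y.2.2⟩) ⟨?_, ?_⟩, ?_⟩⟩
  · rintro ⟨a, ha⟩ ⟨b, hb⟩ h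
    simp only [Subtype.mk.injEq] at h
    exact Subtype.ext (congrArg (fun z => z.1.1) h)
  · rintro ⟨⟨y, hyS⟩, hy⟩
    exact ⟨⟨y, hyS, hy⟩, rfl⟩
  · rintro ⟨a, ha⟩ ⟨b, hb⟩
    exact Iff.rfl

theorem oType_Iio_lt {S : Set ι} {x : ι} (hx : x ∈ S) :
    oType (S ∩ Set.Iio x) < oType S := by
  rw [oType_Iio hx]; exact typein_lt_type _ _

theorem oType_le_of_forall {S : Set ι} {o : Ordinal}
    (h : ∀ x, x ∈ S → oType (S ∩ Set.Iio x) < o) : oType S ≤ o := by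
  by_contra hc
  push_neg at hc
  obtain ⟨⟨x, hx⟩, hx2⟩ := typein_surj (Subrel ((· < ·) : ι → ι → Prop) (· ∈ S)) hc
  exact absurd ((oType_Iio hx).trans hx2 ▸ h x hx) (lt_irrefl o).elim

theorem oType_exists {S : Set ι} {o : Ordinal} (h : o < oType S) :
    ∃ x, ∃ hx : x ∈ S, oType (S ∩ Set.Iio x) = o := by
  obtain ⟨⟨x, hx⟩, hx2⟩ := typein_surj (Subrel ((· < ·) : ι → ι → Prop) (· ∈ S)) h
  exact ⟨x, hx, (oType_Iio hx).trans hx2⟩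

theorem oType_union_le (A B : Set ι) : oType (A ∪ B) ≤ oType A ♯ oType B := by
  have main : ∀ γ : Ordinal, ∀ A B : Set ι, oType A ♯ oType B = γ →
      oType (A ∪ B) ≤ γ := by
    intro γ
    induction γ using Ordinal.induction with
    | _ γ IH =>
      intro A B hγ
      refine oType_le_of_forall fun x hx => ?_
      have hsplit : (A ∪ B) ∩ Set.Iio x = (A ∩ Set.Iio x) ∪ (B ∩ Set.Iio x) :=
        Set.union_inter_distrib_right A B _
      have hlt : oType (A ∩ Set.Iio x) ♯ oType (B ∩ Set.Iio x) < γ := by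
        rw [← hγ]
        rcases hx with hx | hx
        · exact (nadd_lt_nadd_right (oType_Iio_lt hx) _).trans_le
            (nadd_le_nadd_left (oType_mono Set.inter_subset_left) _)
        · exact (nadd_lt_nadd_left (oType_Iio_lt hx) _).trans_le
            (nadd_le_nadd_right (oType_mono Set.inter_subset_left) _)
      calc oType ((A ∪ B) ∩ Set.Iio x)
          ≤ oType (A ∩ Set.Iio x) ♯ oType (B ∩ Set.Iio x) := by
            rw [hsplit]; exact IH _ hlt _ _ rfl
        _ < γ := hlt
  exact main _ A B rfl

end Plumbing

theorem nadd_block_le {W : Ordinal} (hW : W ≠ 0)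
    (hP : ∀ ρ σ, ρ < W → σ < W → ρ ♯ σ < W) :
    ∀ N : ℕ, ∀ m k : ℕ, m + k ≤ N → ∀ t ρ σ, ρ < W → σ < W → ρ ♯ σ ≤ t →
      (W * m + ρ) ♯ (W * k + σ) ≤ W * (m + k : ℕ) + (ρ ♯ σ) := by
  intro N
  induction N with
  | zero =>
    intro m k hmk t ρ σ hρ hσ ht
    obtain ⟨rfl, rfl⟩ : m = 0 ∧ k = 0 := by omega
    simp
  | succ N IHN =>
    intro m k hmk
    rcases Nat.lt_or_ge (m + k) (N + 1) with h | h
    · exact fun t => IHN m k (by omega) t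
    have hmk' : m + k = N + 1 := by omega
    intro t
    induction t using Ordinal.induction with
    | _ t IHt =>
      intro ρ σ hρ hσ ht
      rw [nadd_le_iff]
      constructor
      · intro a' ha'
        rcases le_or_gt (W * m) a' with h1 | h2
        · set ρ' := a' - W * m with hρ'def
          have ha'' : a' = W * m + ρ' := (Ordinal.add_sub_cancel_of_le h1).symm
          have hρ'ρ : ρ' < ρ := by
            rw [ha''] at ha'; exact (add_lt_add_iff_left _).1 ha'
          have hlt : ρ' ♯ σ < ρ ♯ σ := nadd_lt_nadd_right hρ'ρ _
          have := IHt (ρ' ♯ σ) (hlt.trans_le ht) ρ' σ (hρ'ρ.trans hρ) hσ le_rfl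
          rw [ha'']
          exact this.trans_lt (add_lt_add_right hlt _)
        · -- a' < W * m
          have hm1 : (0:Ordinal) < W * m := lt_of_le_of_lt zero_le h2
          have hj : a' / W < (m : Ordinal) := (Ordinal.div_lt hW).2 h2
          have hjω : a' / W < omega0 := hj.trans (natCast_lt_omega0 m)
          obtain ⟨jn, hjn⟩ := lt_omega0.1 hjω
          have hjnm : jn < m := by
            have := hjn ▸ hj; exact_mod_cast this
          have hρ'' : a' % W < W := Ordinal.mod_lt _ hW
          have ha'eq : a' = W * jn + a' % W := by
            conv_lhs => rw [← Ordinal.div_add_mod a' W]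
            rw [hjn]
          have hIH := IHN jn k (by omega) (a' % W ♯ σ) (a' % W) σ hρ'' hσ le_rfl
          rw [ha'eq]
          refine hIH.trans_lt ?_
          have h3 : W * (jn + k : ℕ) + (a' % W ♯ σ) < W * (jn + k : ℕ) + W :=
            add_lt_add_right (hP _ _ hρ'' hσ) _
          have h4 : W * (jn + k : ℕ) + W = W * ((jn + k + 1 : ℕ)) := by
            rw [show ((jn + k + 1 : ℕ) : Ordinal) = ((jn + k : ℕ) : Ordinal) + 1 by push_cast; ring,
              mul_add, mul_one]
          have h5 : W * ((jn + k + 1 : ℕ) : Ordinal) ≤ W * ((m + k : ℕ) : Ordinal) :=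
            mul_le_mul_right (Nat.cast_le.2 (by omega)) _
          refine h3.trans_le ?_
          rw [h4]
          exact h5.trans (le_self_add)
      · intro b' hb'
        rcases le_or_gt (W * k) b' with h1 | h2
        · set σ' := b' - W * k with hσ'def
          have hb'' : b' = W * k + σ' := (Ordinal.add_sub_cancel_of_le h1).symm
          have hσ'σ : σ' < σ := by
            rw [hb''] at hb'; exact (add_lt_add_iff_left _).1 hb'
          have hlt : ρ ♯ σ' < ρ ♯ σ := nadd_lt_nadd_left hσ'σ _
          have := IHt (ρ ♯ σ') (hlt.trans_le ht) ρ σ' hρ (hσ'σ.trans hσ) le_rfl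
          rw [hb'']
          exact this.trans_lt (add_lt_add_right hlt _)
        · have hj : b' / W < (k : Ordinal) := (Ordinal.div_lt hW).2 h2
          obtain ⟨jn, hjn⟩ := lt_omega0.1 (hj.trans (natCast_lt_omega0 k))
          have hjnk : jn < k := by
            have := hjn ▸ hj; exact_mod_cast this
          have hρ'' : b' % W < W := Ordinal.mod_lt _ hW
          have hb'eq : b' = W * jn + b' % W := by
            conv_lhs => rw [← Ordinal.div_add_mod b' W]
            rw [hjn]
          have hIH := IHN m jn (by omega) (ρ ♯ b' % W) ρ (b' % W) hρ hρ'' le_rfl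
          rw [hb'eq]
          refine hIH.trans_lt ?_
          have h3 : W * (m + jn : ℕ) + (ρ ♯ b' % W) < W * (m + jn : ℕ) + W :=
            add_lt_add_right (hP _ _ hρ hρ'') _
          have h4 : W * (m + jn : ℕ) + W = W * ((m + jn + 1 : ℕ) : Ordinal) := by
            rw [show ((m + jn + 1 : ℕ) : Ordinal) = ((m + jn : ℕ) : Ordinal) + 1 by push_cast; ring,
              mul_add, mul_one]
          refine h3.trans_le ?_
          rw [h4]
          exact (mul_le_mul_right (Nat.cast_le.2 (show m+jn+1 ≤ m+k by omega) :
              ((m+jn+1 : ℕ) : Ordinal) ≤ ((m+k : ℕ) : Ordinal)) W).trans (le_self_add)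

theorem nadd_lt_omega0_opow' : ∀ δ : Ordinal, ∀ a b, a < omega0 ^ δ → b < omega0 ^ δ →
    a ♯ b < omega0 ^ δ := by
  intro δ
  induction δ using Ordinal.induction with
  | _ δ IH =>
    rcases Ordinal.zero_or_succ_or_isSuccLimit δ with rfl | ⟨η, rfl⟩ | hlim
    · intro a b ha hb
      rw [opow_zero, Ordinal.lt_one_iff_zero] at ha hb
      subst ha; subst hb; simp
    · intro a b ha hb
      have hη : η < Order.succ η := Order.lt_succ_of_not_isMax (not_isMax η)
      have hP := IH η hη
      set W := omega0 ^ η with hWdef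
      have hW : W ≠ 0 := opow_ne_zero _ omega0_ne_zero
      have hWω : omega0 ^ Order.succ η = W * omega0 := by
        rw [hWdef, opow_succ]
      rw [hWω] at ha hb ⊢
      obtain ⟨mn, hmn⟩ := lt_omega0.1 ((Ordinal.div_lt hW).2 ha)
      obtain ⟨kn, hkn⟩ := lt_omega0.1 ((Ordinal.div_lt hW).2 hb)
      have haeq : a = W * mn + a % W := by
        conv_lhs => rw [← Ordinal.div_add_mod a W]; rw [hmn]
      have hbeq : b = W * kn + b % W := by
        conv_lhs => rw [← Ordinal.div_add_mod b W]; rw [hkn]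
      have h := nadd_block_le hW hP (mn + kn) mn kn le_rfl (a % W ♯ b % W)
        (a % W) (b % W) (Ordinal.mod_lt _ hW) (Ordinal.mod_lt _ hW) le_rfl
      rw [haeq, hbeq]
      refine h.trans_lt ?_
      have h2 : W * (mn + kn : ℕ) + (a % W ♯ b % W) < W * (mn + kn : ℕ) + W :=
        add_lt_add_right (hP _ _ (Ordinal.mod_lt _ hW) (Ordinal.mod_lt _ hW)) _
      refine h2.trans_le ?_
      rw [show W * ((mn + kn : ℕ) : Ordinal) + W = W * ((mn + kn + 1 : ℕ) : Ordinal) by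
        rw [show ((mn + kn + 1 : ℕ) : Ordinal) = ((mn + kn : ℕ) : Ordinal) + 1 by push_cast; ring,
          mul_add, mul_one]]
      exact (mul_le_mul_right (natCast_lt_omega0 _).le _)
    · intro a b ha hb
      obtain ⟨η₁, hη₁, ha'⟩ := (lt_opow_of_isSuccLimit omega0_ne_zero hlim).1 ha
      obtain ⟨η₂, hη₂, hb'⟩ := (lt_opow_of_isSuccLimit omega0_ne_zero hlim).1 hb
      have hη : max η₁ η₂ < δ := max_lt hη₁ hη₂
      have h := IH _ hη a b
        (ha'.trans_le (opow_le_opow_right omega0_pos (le_max_left _ _)))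
        (hb'.trans_le (opow_le_opow_right omega0_pos (le_max_right _ _)))
      exact h.trans_le (opow_le_opow_right omega0_pos hη.le)

theorem cnfSum_succ {n : ℕ} (e : Fin (n+1) → Ordinal) (c : Fin (n+1) → ℕ) :
    cnfSum (n+1) e c = omega0 ^ (e 0) * (c 0) +
      cnfSum n (fun i => e i.succ) (fun i => c i.succ) := by
  simp [cnfSum, List.ofFn_succ]

theorem cnfSum_zero_coeffs {n : ℕ} (e : Fin n → Ordinal) :
    cnfSum n e (fun _ => 0) = 0 := by
  refine List.sum_eq_zero fun x hx => ?_
  obtain ⟨i, rfl⟩ := List.mem_ofFn.1 hx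
  simp

theorem cnfSum_lt_opow {n : ℕ} {e : Fin n → Ordinal} {E : Ordinal} (h : ∀ i, e i < E)
    (a : Fin n → ℕ) : cnfSum n e a < omega0 ^ E := by
  induction n with
  | zero => simpa [cnfSum] using opow_pos E omega0_pos
  | succ n IH =>
    rw [cnfSum_succ]
    refine principal_add_omega0_opow E ?_ (IH (fun i => h i.succ) _)
    calc omega0 ^ e 0 * (a 0 : Ordinal) < omega0 ^ e 0 * omega0 :=
          mul_lt_mul_of_pos_left (natCast_lt_omega0 _) (opow_pos _ omega0_pos)
      _ = omega0 ^ (Order.succ (e 0)) := by rw [opow_succ]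
      _ ≤ omega0 ^ E := opow_le_opow_right omega0_pos (Order.succ_le_of_lt (h 0))

theorem add_opow_mul {W ρ : Ordinal} (hρ : ρ < W) (hW : ∃ E : Ordinal, W = omega0 ^ E) {c : ℕ}
    (hc : 1 ≤ c) : ρ + W * c = W * c := by
  obtain ⟨E, rfl⟩ := hW
  have : (c : Ordinal) = 1 + ((c - 1 : ℕ) : Ordinal) := by
    conv_lhs => rw [show c = 1 + (c - 1) from by omega]
    rw [Nat.cast_add, Nat.cast_one]
  rw [this, mul_add, mul_one, ← add_assoc, add_omega0_opow hρ]

theorem cnf_sub : ∀ n (e : Fin n → Ordinal) (a : Fin n → ℕ) (σ τ : Ordinal),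
    σ + τ = cnfSum n e a → ∃ a' : Fin n → ℕ, (∀ i, a' i ≤ a i) ∧ τ = cnfSum n e a' := by
  intro n
  induction n with
  | zero =>
    intro e a σ τ h
    refine ⟨a, fun i => le_rfl, ?_⟩
    have : cnfSum 0 e a = 0 := by simp [cnfSum]
    rw [this] at h ⊢
    exact (Ordinal.add_eq_zero_iff.1 h).2
  | succ n IH =>
    intro e a σ τ h
    rw [cnfSum_succ] at h
    set W := omega0 ^ e 0 with hWdef
    have hW : W ≠ 0 := opow_ne_zero _ omega0_ne_zero
    rcases le_or_gt (W * a 0) σ with h1 | h2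
    · -- σ eats the whole head
      set σ' := σ - W * a 0 with hσ'
      have hσeq : σ = W * a 0 + σ' := (Ordinal.add_sub_cancel_of_le h1).symm
      rw [hσeq, add_assoc] at h
      have h' := (add_right_inj _).1 h
      obtain ⟨a'', ha''le, ha''⟩ := IH _ _ _ _ h'
      refine ⟨Fin.cons 0 a'', fun i => ?_, ?_⟩
      · refine Fin.cases ?_ (fun j => ?_) i
        · simp
        · simpa using ha''le j
      · rw [cnfSum_succ]
        simpa using ha''
    · -- σ stops inside the head block; a 0 ≥ 1
      have ha0 : 1 ≤ a 0 := by
        by_contra hc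
        push_neg at hc
        interval_cases h : a 0
        · simp at h2
      obtain ⟨jn, hjn⟩ := lt_omega0.1 (((Ordinal.div_lt hW).2 h2).trans (natCast_lt_omega0 _))
      have hjna : jn < a 0 := by
        have := hjn ▸ (Ordinal.div_lt hW).2 h2
        exact_mod_cast this
      have hσeq : σ = W * jn + σ % W := by
        conv_lhs => rw [← Ordinal.div_add_mod σ W]; rw [hjn]
      have hmod : σ % W < W := Ordinal.mod_lt _ hW
      set R := cnfSum n (fun i => e i.succ) (fun i => a i.succ) with hR
      have key : σ + (W * ((a 0 - jn : ℕ) : Ordinal) + R) = W * a 0 + R := by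
        rw [hσeq, add_assoc, ← add_assoc (σ % W), add_opow_mul hmod ⟨_, hWdef⟩ (by omega),
          ← add_assoc, ← mul_add]
        congr 2
        exact_mod_cast (by omega : jn + (a 0 - jn) = a 0)
      have hτ : τ = W * ((a 0 - jn : ℕ) : Ordinal) + R := by
        apply (add_right_inj σ).1
        rw [h, key]
      refine ⟨Fin.cons (a 0 - jn) (fun i => a i.succ), fun i => ?_, ?_⟩
      · refine Fin.cases ?_ (fun j => ?_) i
        · simp
        · simp
      · rw [cnfSum_succ, hτ]
        simp [hWdef, hR]

theorem cnf_head_le {n : ℕ} {e : Fin (n+1) → Ordinal} (he : StrictAnti e)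
    (a : Fin (n+1) → ℕ) {k : ℕ} {γ' : Ordinal} (hγ' : γ' < omega0 ^ e 0)
    (h : cnfSum (n+1) e a ≤ omega0 ^ e 0 * k + γ') : a 0 ≤ k := by
  set W := omega0 ^ e 0 with hWdef
  by_contra hc
  push_neg at hc
  have htail : cnfSum n (fun i => e i.succ) (fun i => a i.succ) < W :=
    cnfSum_lt_opow (fun i => he (Fin.succ_pos i)) _
  have h1 : omega0 ^ e 0 * k + γ' < W * ((k+1 : ℕ) : Ordinal) := by
    rw [show ((k+1 : ℕ) : Ordinal) = (k : Ordinal) + 1 by push_cast; ring, mul_add, mul_one]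
    exact add_lt_add_right hγ' _
  have h2 : W * ((k+1 : ℕ) : Ordinal) ≤ W * (a 0 : ℕ) :=
    mul_le_mul_right (Nat.cast_le.2 (by omega)) _
  have h3 : W * (a 0 : ℕ) ≤ cnfSum (n+1) e a := by
    rw [cnfSum_succ]
    exact le_self_add
  exact absurd ((h.trans_lt h1).trans_le (h2.trans h3)) (lt_irrefl _)

theorem union_cnf_aux {ι : Type*} [LinearOrder ι] [WellFoundedLT ι] :
    ∀ n : ℕ, ∀ e : Fin n → Ordinal, StrictAnti e →
    ∀ γ : Ordinal, ∀ A B : Set ι, ∀ a b : Fin n → ℕ,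
      oType A = cnfSum n e a → oType B = cnfSum n e b → oType (A ∪ B) = γ →
      ∃ c : Fin n → ℕ, γ = cnfSum n e c ∧ ∀ i, c i ≤ a i + b i := by
  intro n
  induction n with
  | zero =>
    intro e he γ A B a b hA hB hγ
    have hA0 : oType A = 0 := by rw [hA]; simp [cnfSum]
    have hB0 : oType B = 0 := by rw [hB]; simp [cnfSum]
    rw [oType_eq_empty hA0, oType_eq_empty hB0, Set.union_empty, oType_empty] at hγ
    exact ⟨a, by rw [← hγ]; simp [cnfSum], fun i => i.elim0⟩
  | succ n IH =>
    intro e he γ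
    induction γ using Ordinal.induction with
    | _ γ IHγ =>
      intro A B a b hA hB hγ
      have he' : StrictAnti (fun i : Fin n => e i.succ) :=
        he.comp_strictMono Fin.strictMono_succ
      set W := omega0 ^ e 0 with hWdef
      have hW : W ≠ 0 := opow_ne_zero _ omega0_ne_zero
      have hWpos : (0:Ordinal) < W := opow_pos _ omega0_pos
      have htail_lt : ∀ c : Fin (n+1) → ℕ,
          cnfSum n (fun i => e i.succ) (fun i => c i.succ) < W :=
        fun c => cnfSum_lt_opow (fun i => he (Fin.succ_pos i)) _
      by_cases h0 : a 0 = 0 ∧ b 0 = 0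
      · have hA' : oType A = cnfSum n (fun i => e i.succ) (fun i => a i.succ) := by
          rw [hA, cnfSum_succ, h0.1]; simp
        have hB' : oType B = cnfSum n (fun i => e i.succ) (fun i => b i.succ) := by
          rw [hB, cnfSum_succ, h0.2]; simp
        obtain ⟨c', hc', hc'le⟩ := IH _ he' γ A B _ _ hA' hB' hγ
        refine ⟨Fin.cons 0 c', ?_, ?_⟩
        · rw [cnfSum_succ]
          simpa using hc'
        · intro i
          refine Fin.cases ?_ (fun j => ?_) i
          · simp
          · simpa using hc'le j
      · -- max (a 0) (b 0) ≥ 1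
        have hαlt : cnfSum (n+1) e a < omega0 ^ (Order.succ (e 0)) :=
          cnfSum_lt_opow (fun i => lt_of_le_of_lt (he.antitone (Fin.zero_le i))
            (Order.lt_succ _)) _
        have hβlt : cnfSum (n+1) e b < omega0 ^ (Order.succ (e 0)) :=
          cnfSum_lt_opow (fun i => lt_of_le_of_lt (he.antitone (Fin.zero_le i))
            (Order.lt_succ _)) _
        have hγle : γ ≤ cnfSum (n+1) e a ♯ cnfSum (n+1) e b := by
          rw [← hγ, ← hA, ← hB]; exact oType_union_le A B
        have hγlt : γ < omega0 ^ (Order.succ (e 0)) :=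
          hγle.trans_lt (nadd_lt_omega0_opow' _ _ _ hαlt hβlt)
        have hWω : omega0 ^ (Order.succ (e 0)) = W * omega0 := by rw [hWdef, opow_succ]
        obtain ⟨c0, hc0⟩ := lt_omega0.1 ((Ordinal.div_lt hW).2 (hWω ▸ hγlt))
        set γ' := γ % W with hγ'def
        have hγ'lt : γ' < W := Ordinal.mod_lt _ hW
        have hγeq : γ = W * (c0 : ℕ) + γ' := by
          conv_lhs => rw [← Ordinal.div_add_mod γ W]; rw [hc0]
        -- head coefficient bounds
        have ha0c0 : a 0 ≤ c0 := by
          refine cnf_head_le he a hγ'lt ?_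
          rw [← hγeq, ← hA, ← hγ]
          exact oType_mono Set.subset_union_left
        have hb0c0 : b 0 ≤ c0 := by
          refine cnf_head_le he b hγ'lt ?_
          rw [← hγeq, ← hB, ← hγ]
          exact oType_mono Set.subset_union_right
        have hc0pos : 1 ≤ c0 := by
          rcases Nat.eq_zero_or_pos (a 0) with h1 | h1
          · rcases Nat.eq_zero_or_pos (b 0) with h2 | h2
            · exact absurd ⟨h1, h2⟩ h0
            · omega
          · omega
        have hc0ub : c0 ≤ a 0 + b 0 := by
          have hub : cnfSum (n+1) e a ♯ cnfSum (n+1) e b ≤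
              W * ((a 0 + b 0 : ℕ) : Ordinal) +
                (cnfSum n (fun i => e i.succ) (fun i => a i.succ) ♯
                 cnfSum n (fun i => e i.succ) (fun i => b i.succ)) := by
            have := nadd_block_le hW (fun ρ σ hρ hσ => nadd_lt_omega0_opow' _ _ _ hρ hσ)
              (a 0 + b 0) (a 0) (b 0) le_rfl _ _ _ (htail_lt a) (htail_lt b) le_rfl
            rw [cnfSum_succ e a, cnfSum_succ e b]
            exact this
          have h2 : γ < W * ((a 0 + b 0 + 1 : ℕ) : Ordinal) := by
            refine (hγle.trans hub).trans_lt ?_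
            rw [show ((a 0 + b 0 + 1 : ℕ) : Ordinal) = ((a 0 + b 0 : ℕ) : Ordinal) + 1 by
              push_cast; ring, mul_add, mul_one]
            exact add_lt_add_right (nadd_lt_omega0_opow' _ _ _ (htail_lt a) (htail_lt b)) _
          have h3 : γ / W < ((a 0 + b 0 + 1 : ℕ) : Ordinal) := (Ordinal.div_lt hW).2 h2
          rw [hc0] at h3
          exact_mod_cast Nat.lt_succ_iff.1 (by exact_mod_cast h3)
        rcases eq_or_lt_of_le (zero_le (a := γ')) with hγ'0 | hγ'0
        · refine ⟨Fin.cons c0 (fun _ => 0), ?_, ?_⟩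
          · rw [cnfSum_succ, hγeq, ← hγ'0]
            simp only [Fin.cons_zero, Fin.cons_succ]
            rw [cnfSum_zero_coeffs]
          · intro i
            refine Fin.cases ?_ (fun j => ?_) i
            · simpa using hc0ub
            · simp
        · -- γ' > 0 : split at the point of position W * c0
          have hWc0γ : W * (c0 : ℕ) < γ := by
            conv_rhs => rw [hγeq]
            simpa using (add_lt_add_iff_left (W * (c0 : ℕ))).2 hγ'0
          obtain ⟨x, hxU, hx⟩ := oType_exists (S := A ∪ B) (hγ ▸ hWc0γ)
          have hsplitU := oType_split (A ∪ B) x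
          rw [hγ, hx] at hsplitU
          have htailU : oType ((A ∪ B) ∩ Set.Ici x) = γ' := by
            have := hsplitU.symm.trans hγeq
            exact (add_right_inj _).1 this
          have hAsplit := (oType_split A x).symm.trans hA
          have hBsplit := (oType_split B x).symm.trans hB
          obtain ⟨a', ha'le, ha'⟩ := cnf_sub _ e a _ _ hAsplit
          obtain ⟨b', hb'le, hb'⟩ := cnf_sub _ e b _ _ hBsplit
          have hset : (A ∪ B) ∩ Set.Ici x = (A ∩ Set.Ici x) ∪ (B ∩ Set.Ici x) :=
            Set.union_inter_distrib_right A B _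
          rw [hset] at htailU
          have hγ'γ : γ' < γ := by
            refine hγ'lt.trans_le ?_
            calc W = W * 1 := (mul_one W).symm
              _ ≤ W * (c0 : ℕ) := mul_le_mul_right (by exact_mod_cast hc0pos) _
              _ ≤ γ := hWc0γ.le
          obtain ⟨c', hc'sum, hc'le⟩ := IHγ γ' hγ'γ (A ∩ Set.Ici x) (B ∩ Set.Ici x)
            a' b' ha' hb' htailU
          have hc'0 : c' 0 = 0 := by
            by_contra hc'0
            have h1 : W ≤ W * (c' 0 : ℕ) :=
              le_mul_of_one_le_right zero_le (by exact_mod_cast Nat.one_le_iff_ne_zero.2 hc'0)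
            have h2 : W * (c' 0 : ℕ) ≤ γ' := by
              rw [hc'sum, cnfSum_succ]
              exact le_self_add
            exact absurd ((h1.trans h2).trans_lt hγ'lt) (lt_irrefl _)
          refine ⟨Fin.cons c0 (fun i => c' i.succ), ?_, ?_⟩
          · rw [cnfSum_succ, hγeq, hc'sum, cnfSum_succ, hc'0]
            simp [hWdef]
          · intro i
            refine Fin.cases ?_ (fun j => ?_) i
            · simpa using hc0ub
            · simpa using (hc'le j.succ).trans (add_le_add (ha'le j.succ) (hb'le j.succ))

theorem union_cnf {ι : Type*} [LinearOrder ι] [WellFoundedLT ι] [Countable ι]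
    (A B : Set ι) (n : ℕ) (e : Fin n → Ordinal) (he : StrictAnti e)
    (a b : Fin n → ℕ) (hab : ∀ i, 1 ≤ max (a i) (b i))
    (hA : oType A = cnfSum n e a) (hB : oType B = cnfSum n e b) :
    ∃ c : Fin n → ℕ, oType (A ∪ B) = cnfSum n e c ∧
      (∀ i, c i ≤ a i + b i) ∧
      ∀ h : 0 < n, max (a ⟨0, h⟩) (b ⟨0, h⟩) ≤ c ⟨0, h⟩ := by
  obtain ⟨c, hc, hcle⟩ := union_cnf_aux n e he (oType (A ∪ B)) A B a b hA hB rfl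
  refine ⟨c, hc, hcle, ?_⟩
  intro h
  cases n with
  | zero => omega
  | succ m =>
    have h0 : (⟨0, h⟩ : Fin (m+1)) = 0 := rfl
    rw [h0]
    have htail : cnfSum m (fun i => e i.succ) (fun i => c i.succ) < omega0 ^ e 0 :=
      cnfSum_lt_opow (fun i => he (Fin.succ_pos i)) _
    have hcform : oType (A ∪ B) = omega0 ^ e 0 * (c 0 : ℕ) +
        cnfSum m (fun i => e i.succ) (fun i => c i.succ) := by
      rw [hc, cnfSum_succ]
    have ha0 : a 0 ≤ c 0 := by
      refine cnf_head_le he a htail ?_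
      rw [← hcform, ← hA]
      exact oType_mono Set.subset_union_left
    have hb0 : b 0 ≤ c 0 := by
      refine cnf_head_le he b htail ?_
      rw [← hcform, ← hB]
      exact oType_mono Set.subset_union_right
    exact max_le ha0 hb0
end

section
/- Let u be a nonempty finite word over a totally ordered alphabet and let L be a language such that every word w ∈ L satisfies w <_s u^ω (strictly below the ω-power of u in the strict order), and such that for every N ≥ 0 there is a word w ∈ L with u^N <_ℓ w. Then the supremum of L in (Σ^{≤ω}, <_ℓ) is exactly u^ω, and L has no greatest element. -/
open Stream'

variable {α : Type*}

/-- The ω-power `u^ω` of a nonempty finite word `u`. -/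
def omegaPow (u : List α) (hu : u ≠ []) : Seq α := Seq.ofStream (Stream'.cycle u hu)

lemma get?_ofStream (s : Stream' α) (n : ℕ) : (Seq.ofStream s).get? n = some (s.get n) := rfl

lemma get?_ofList' (l : List α) (n : ℕ) : (Seq.ofList l).get? n = l[n]? := rfl

lemma get_appendStream_left (l : List α) (s : Stream' α) : ∀ i, i < l.length →
    some ((l ++ₛ s).get i) = l[i]? := by
  induction l with
  | nil => simp
  | cons a l ih =>
    intro i hi
    rw [cons_append_stream]
    cases i with
    | zero => rfl
    | succ i =>
      show some ((l ++ₛ s).get i) = l[i]?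
      exact ih i (by simpa using hi)

lemma get_appendStream_right (l : List α) (s : Stream' α) (j : ℕ) :
    (l ++ₛ s).get (l.length + j) = s.get j := by
  conv_rhs => rw [← drop_append_stream l s]
  rw [get_drop, Nat.add_comm]

/-- The first `N * |u|` letters of `u^ω` are `(replicate N u).flatten`. -/
lemma cycleFlatten (u : List α) (hu : u ≠ []) : ∀ (N i : ℕ), i < N * u.length →
    ((List.replicate N u).flatten)[i]? = some ((Stream'.cycle u hu).get i)
  | 0, i, h => absurd h (by simp)
  | N+1, i, h => by
    rw [List.replicate_succ, List.flatten_cons]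
    rw [cycle_eq]
    rcases lt_or_ge i u.length with hi | hi
    · rw [List.getElem?_append_left hi,
        ← get_appendStream_left u _ i hi]
    · obtain ⟨j, rfl⟩ := Nat.exists_eq_add_of_le hi
      rw [List.getElem?_append_right hi]
      simp only [Nat.add_sub_cancel_left]
      rw [get_appendStream_right]
      have hj : j < N * u.length := by
        have := h
        rw [Nat.succ_mul] at this
        omega
      exact cycleFlatten u hu N j hj

/-- Trichotomy for the lexicographic order. -/
lemma lex_trichotomy [LinearOrder α] (s t : Seq α) :
    s = t ∨ sLt s t ∨ sLt t s ∨ pLt s t ∨ pLt t s := by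
  by_cases hst : s = t
  · exact Or.inl hst
  have hex : ∃ n, s.get? n ≠ t.get? n := by
    by_contra h
    push_neg at h
    exact hst (Seq.ext h)
  classical
  set n := Nat.find hex with hn
  have hne : s.get? n ≠ t.get? n := Nat.find_spec hex
  have hagree : ∀ i < n, s.get? i = t.get? i := fun i hi => by
    have := Nat.find_min hex hi
    push_neg at this
    exact this
  cases hs : s.get? n with
  | none =>
    cases ht : t.get? n with
    | none => exact absurd (hs.trans ht.symm) hne
    | some b =>
      -- s ends before n, so s is a proper prefix of t
      right; right; right; left
      refine ⟨hst, fun i a ha => ?_⟩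
      have hin : i < n := by
        by_contra hin
        push_neg at hin
        rw [Seq.le_stable s hin hs] at ha
        exact nomatch ha
      rw [← hagree i hin]; exact ha
  | some a =>
    cases ht : t.get? n with
    | none =>
      right; right; right; right
      refine ⟨Ne.symm hst, fun i b hb => ?_⟩
      have hin : i < n := by
        by_contra hin
        push_neg at hin
        rw [Seq.le_stable t hin ht] at hb
        exact nomatch hb
      rw [hagree i hin]; exact hb
    | some b =>
      have hab : a ≠ b := fun h => hne (by rw [hs, ht, h])
      rcases lt_or_gt_of_ne hab with h | h
      · exact Or.inr (Or.inl ⟨n, a, b, hagree, hs, ht, h⟩)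
      · exact Or.inr (Or.inr (Or.inl ⟨n, b, a, fun i hi => (hagree i hi).symm, ht, hs, h⟩))

/-- If `w` agrees with `W` up to position `k`, and `t` differs from `W` first at `k`
with a smaller letter, then `w ≤ t` is impossible. -/
lemma contra_lemma [LinearOrder α] (W w t : Seq α) (k : ℕ) (b c : α)
    (hw : ∀ i ≤ k, w.get? i = W.get? i)
    (hagree : ∀ i < k, t.get? i = W.get? i)
    (htk : t.get? k = some c) (hWk : W.get? k = some b) (hcb : c < b)
    (h : lexLe w t) : False := by
  have hwk : w.get? k = some b := (hw k le_rfl).trans hWk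
  rcases h with (hs | hp) | heq
  · obtain ⟨q, a', b', hag, hq1, hq2, hab⟩ := hs
    rcases lt_trichotomy q k with hqk | rfl | hqk
    · -- q < k : w[q] = W[q] = t[q] yet a' < b'
      have : w.get? q = t.get? q := (hw q hqk.le).trans (hagree q hqk).symm
      rw [hq1, hq2] at this
      exact absurd (Option.some.inj this) (ne_of_lt hab)
    · -- q = k
      have ha' : a' = b := Option.some.inj (hq1.symm.trans hwk)
      have hb' : b' = c := Option.some.inj (hq2.symm.trans htk)
      rw [ha', hb'] at hab
      exact absurd (hab.trans hcb) (lt_irrefl b)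
    · -- q > k : w[k] = t[k] yet they differ
      have : w.get? k = t.get? k := hag k hqk
      rw [hwk, htk] at this
      exact absurd (Option.some.inj this) (ne_of_lt hcb).symm
  · have := hp.2 k b hwk
    rw [htk] at this
    exact absurd (Option.some.inj this) (ne_of_lt hcb)
  · rw [heq, htk] at hwk
    exact absurd (Option.some.inj hwk) (ne_of_lt hcb)

theorem sup_eq_omegaPow [LinearOrder α] (u : List α) (hu : u ≠ []) (L : Set (List α))
    (h1 : ∀ w ∈ L, sLt (Seq.ofList w) (omegaPow u hu))
    (h2 : ∀ N : ℕ, ∃ w ∈ L, lexLt (Seq.ofList (List.replicate N u).flatten) (Seq.ofList w)) :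
    IsSupW (Seq.ofList '' L) (omegaPow u hu) ∧
      ¬ ∃ m ∈ L, ∀ w ∈ L, lexLe (Seq.ofList w) (Seq.ofList m) := by
  set W := omegaPow u hu with hW
  have hWget : ∀ i, W.get? i = some ((Stream'.cycle u hu).get i) := fun i => rfl
  have hulen : 0 < u.length := List.length_pos_iff.mpr hu
  -- key agreement lemma
  have key : ∀ N, ∃ w ∈ L, ∀ i < N * u.length, (Seq.ofList w).get? i = W.get? i := by
    intro N
    obtain ⟨w, hwL, hlt⟩ := h2 N
    refine ⟨w, hwL, ?_⟩
    have hflat : ∀ i < N * u.length,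
        (Seq.ofList (List.replicate N u).flatten).get? i = W.get? i := fun i hi => by
      rw [get?_ofList', cycleFlatten u hu N i hi, hWget]
    rcases hlt with hs | hp
    · -- sLt of the power into w is impossible
      exfalso
      obtain ⟨q, a', b', hag, hq1, hq2, hab⟩ := hs
      have hqlt : q < N * u.length := by
        by_contra hq
        push_neg at hq
        have hlen : ((List.replicate N u).flatten).length = N * u.length := by
          simp [List.length_flatten, List.map_replicate, Nat.mul_comm]
        have : ((List.replicate N u).flatten)[q]? = none :=
          List.getElem?_eq_none (by omega)
        rw [get?_ofList', this] at hq1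
        exact nomatch hq1
      -- w <_s W at some position m
      obtain ⟨m, a, b, hmag, hm1, hm2, hab2⟩ := h1 w hwL
      rcases lt_trichotomy q m with hqm | rfl | hqm
      · have : (Seq.ofList w).get? q = W.get? q := hmag q hqm
        rw [hq2, ← hflat q hqlt, hq1] at this
        exact absurd (Option.some.inj this).symm (ne_of_lt hab)
      · have h1' : a' = b := by
          have := (hflat q hqlt).trans hm2
          rw [hq1] at this
          exact Option.some.inj this
        have h2' : b' = a := Option.some.inj (hq2.symm.trans hm1)
        rw [h1', h2'] at hab
        exact absurd (hab.trans hab2) (lt_irrefl b)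
      · have hmlt : m < N * u.length := hqm.trans hqlt
        have : (Seq.ofList (List.replicate N u).flatten).get? m = (Seq.ofList w).get? m :=
          hag m hqm
        rw [hflat m hmlt, hm1, hm2] at this
        exact absurd (Option.some.inj this) (ne_of_gt hab2)
    · intro i hi
      have := hp.2 i ((Stream'.cycle u hu).get i) (by rw [hflat i hi, hWget])
      rw [this, hWget]
  refine ⟨⟨?_, ?_⟩, ?_⟩
  · rintro v ⟨w, hwL, rfl⟩
    exact Or.inl (Or.inl (h1 w hwL))
  · intro t ht
    rcases lex_trichotomy W t with heq | hs | hs | hp | hp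
    · exact Or.inr heq
    · exact Or.inl (Or.inl hs)
    · -- sLt t W : contradiction via key
      exfalso
      obtain ⟨k, c, b, hagree, htk, hWk, hcb⟩ := hs
      obtain ⟨w, hwL, hkey⟩ := key (k + 1)
      have hk : ∀ i ≤ k, (Seq.ofList w).get? i = W.get? i := fun i hik =>
        hkey i (lt_of_lt_of_le (Nat.lt_succ_of_le hik)
          (le_mul_of_one_le_right (Nat.zero_le _) hulen))
      exact contra_lemma W (Seq.ofList w) t k b c hk hagree htk hWk hcb
        (ht _ ⟨w, hwL, rfl⟩)
    · exact Or.inl (Or.inr hp)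
    · -- pLt t W : t is proper prefix, contradiction via key
      exfalso
      -- t ≠ W but every entry of t matches W; then t.get? must be none somewhere
      have hne : t ≠ W := hp.1
      have hsome : ∃ k, t.get? k = none := by
        by_contra h
        push_neg at h
        apply hne
        apply Seq.ext
        intro n
        obtain ⟨a, ha⟩ := Option.ne_none_iff_exists'.mp (h n)
        exact ha.trans (hp.2 n a ha).symm
      obtain ⟨k, hk⟩ := hsome
      obtain ⟨w, hwL, hkey⟩ := key (k + 1)
      have hwk : (Seq.ofList w).get? k = some ((Stream'.cycle u hu).get k) := by
        rw [hkey k (lt_of_lt_of_le (Nat.lt_succ_self k)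
          (le_mul_of_one_le_right (Nat.zero_le _) hulen)), hWget]
      rcases ht _ ⟨w, hwL, rfl⟩ with (hs | hpp) | heq
      · obtain ⟨q, a', b', _, hq1, hq2, hab⟩ := hs
        have hqk : q < k := by
          by_contra hqk
          push_neg at hqk
          rw [Seq.le_stable t hqk hk] at hq2
          exact nomatch hq2
        have hWq : W.get? q = some b' := hp.2 q b' hq2
        have : (Seq.ofList w).get? q = some b' := by
          rw [hkey q (lt_of_lt_of_le (Nat.lt_succ_of_le hqk.le)
            (le_mul_of_one_le_right (Nat.zero_le _) hulen))]
          exact hWq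
        rw [hq1] at this
        exact absurd (Option.some.inj this) (ne_of_lt hab)
      · have := hpp.2 k _ hwk
        rw [hk] at this
        exact nomatch this
      · rw [heq, hk] at hwk
        exact nomatch hwk
  · rintro ⟨m, hmL, hmax⟩
    obtain ⟨k, c, b, hagree, hmk, hWk, hcb⟩ := h1 m hmL
    obtain ⟨w, hwL, hkey⟩ := key (k + 1)
    have hk : ∀ i ≤ k, (Seq.ofList w).get? i = W.get? i := fun i hik =>
      hkey i (lt_of_lt_of_le (Nat.lt_succ_of_le hik)
        (le_mul_of_one_le_right (Nat.zero_le _) hulen))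
    exact contra_lemma W (Seq.ofList w) (Seq.ofList m) k b c hk hagree hmk hWk hcb
      (hmax w hwL)
end
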